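/- There are exactly 32 Lagrangians L ⊆ V = 𝔽₃^6 such that the projection V → 𝔽₃^3 onto the first three coordinates does NOT restrict to a linear isomorphism on L; equivalently, the total number of Lagrangians in V is 80. -/

import Mathlib

set_option maxRecDepth 100000
set_option maxHeartbeats 8000000
set_option synthInstance.maxSize 2000
set_option synthInstance.maxHeartbeats 1000000



/-- `V = 𝔽₃⁶`. -/
abbrev V3 : Type := Fin 6 → ZMod 3

/-- The symmetric bilinear form `b(x,y) = x₀y₀ + x₁y₁ + x₂y₂ − x₃y₃ − x₄y₄ − x₅y₅`. -/
def bform (x y : V3) : ZMod 3 :=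
  x 0 * y 0 + x 1 * y 1 + x 2 * y 2 - x 3 * y 3 - x 4 * y 4 - x 5 * y 5

/-- A Lagrangian: a 3-dimensional subspace of `V = 𝔽₃⁶` on which `b` vanishes. -/
def IsLagrangian (L : Submodule (ZMod 3) V3) : Prop :=
  Module.finrank (ZMod 3) L = 3 ∧ ∀ x ∈ L, ∀ y ∈ L, bform x y = 0

/-- The projection of `V = 𝔽₃⁶` onto the first three coordinates. -/
def proj3 (x : V3) : Fin 3 → ZMod 3 := fun i => x (Fin.castLE (by omega) i)

namespace LagAux

abbrev Z3 := ZMod 3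

/-- explicit 6-vector -/
def v6 (a b c d e f : Z3) : V3 := ![a,b,c,d,e,f]

@[simp] lemma v6_0 (a b c d e f : Z3) : v6 a b c d e f 0 = a := rfl
@[simp] lemma v6_1 (a b c d e f : Z3) : v6 a b c d e f 1 = b := rfl
@[simp] lemma v6_2 (a b c d e f : Z3) : v6 a b c d e f 2 = c := rfl
@[simp] lemma v6_3 (a b c d e f : Z3) : v6 a b c d e f 3 = d := rfl
@[simp] lemma v6_4 (a b c d e f : Z3) : v6 a b c d e f 4 = e := rfl
@[simp] lemma v6_5 (a b c d e f : Z3) : v6 a b c d e f 5 = f := rfl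

lemma bform_expand (x y : V3) : bform x y =
    x 0 * y 0 + x 1 * y 1 + x 2 * y 2 - x 3 * y 3 - x 4 * y 4 - x 5 * y 5 := rfl

/-- span of three vectors -/
def trip (g1 g2 g3 : V3) : Submodule Z3 V3 :=
  Submodule.span Z3 (Set.range ![g1, g2, g3])

lemma mem_trip {g1 g2 g3 x : V3} :
    x ∈ trip g1 g2 g3 ↔ ∃ a b c : Z3, x = a • g1 + b • g2 + c • g3 := by
  rw [trip, Submodule.mem_span_range_iff_exists_fun]
  constructor
  · rintro ⟨c, rfl⟩
    exact ⟨c 0, c 1, c 2, by simp [Fin.sum_univ_three]⟩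
  · rintro ⟨a, b, c, rfl⟩
    exact ⟨![a, b, c], by simp [Fin.sum_univ_three]⟩

lemma trip_li {g1 g2 g3 : V3}
    (h : ∀ a b c : Z3, a • g1 + b • g2 + c • g3 = 0 → a = 0 ∧ b = 0 ∧ c = 0) :
    LinearIndependent Z3 ![g1, g2, g3] := by
  rw [Fintype.linearIndependent_iff]
  intro g hg
  have := h (g 0) (g 1) (g 2) (by simpa [Fin.sum_univ_three] using hg)
  intro i
  fin_cases i <;> simp [this.1, this.2.1, this.2.2]

lemma trip_finrank {g1 g2 g3 : V3}
    (h : ∀ a b c : Z3, a • g1 + b • g2 + c • g3 = 0 → a = 0 ∧ b = 0 ∧ c = 0) :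
    Module.finrank Z3 (trip g1 g2 g3) = 3 := by
  rw [trip, finrank_span_eq_card (trip_li h)]
  simp

lemma trip_isotropic {g1 g2 g3 : V3}
    (h11 : bform g1 g1 = 0) (h12 : bform g1 g2 = 0) (h13 : bform g1 g3 = 0)
    (h22 : bform g2 g2 = 0) (h23 : bform g2 g3 = 0) (h33 : bform g3 g3 = 0)
    (h21 : bform g2 g1 = 0) (h31 : bform g3 g1 = 0) (h32 : bform g3 g2 = 0) :
    ∀ x ∈ trip g1 g2 g3, ∀ y ∈ trip g1 g2 g3, bform x y = 0 := by
  intro x hx y hy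
  obtain ⟨a, b, c, rfl⟩ := mem_trip.mp hx
  obtain ⟨a', b', c', rfl⟩ := mem_trip.mp hy
  simp only [bform_expand, Pi.add_apply, Pi.smul_apply, smul_eq_mul] at *
  linear_combination (a*a') * h11 + (a*b') * h12 + (a*c') * h13 + (b*a') * h21 +
    (b*b') * h22 + (b*c') * h23 + (c*a') * h31 + (c*b') * h32 + (c*c') * h33

end LagAux
namespace LagAux

abbrev Col := Z3 × Z3 × Z3
def dotc (u v : Col) : Z3 := u.1*v.1 + u.2.1*v.2.1 + u.2.2*v.2.2
def ocond (m : Col × Col × Col) : Prop :=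
  dotc m.1 m.1 = 1 ∧ dotc m.1 m.2.1 = 0 ∧ dotc m.1 m.2.2 = 0 ∧
  dotc m.2.1 m.2.1 = 1 ∧ dotc m.2.1 m.2.2 = 0 ∧ dotc m.2.2 m.2.2 = 1

instance : DecidablePred ocond := fun m => by unfold ocond; infer_instance

def hg1 (m : Col × Col × Col) : V3 := v6 1 0 0 m.1.1 m.1.2.1 m.1.2.2
def hg2 (m : Col × Col × Col) : V3 := v6 0 1 0 m.2.1.1 m.2.1.2.1 m.2.1.2.2
def hg3 (m : Col × Col × Col) : V3 := v6 0 0 1 m.2.2.1 m.2.2.2.1 m.2.2.2.2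

def LA (m : Col × Col × Col) : Submodule Z3 V3 := trip (hg1 m) (hg2 m) (hg3 m)

lemma la_coeffs (m : Col × Col × Col) (a b c : Z3)
    (h : a • hg1 m + b • hg2 m + c • hg3 m = 0) : a = 0 ∧ b = 0 ∧ c = 0 := by
  refine ⟨?_, ?_, ?_⟩
  · simpa [hg1, hg2, hg3] using congrFun h 0
  · simpa [hg1, hg2, hg3] using congrFun h 1
  · simpa [hg1, hg2, hg3] using congrFun h 2

lemma la_lagrangian {m : Col × Col × Col} (h : ocond m) : IsLagrangian (LA m) := by
  obtain ⟨h1, h2, h3, h4, h5, h6⟩ := h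
  simp only [dotc] at h1 h2 h3 h4 h5 h6
  refine ⟨trip_finrank (la_coeffs m), trip_isotropic ?_ ?_ ?_ ?_ ?_ ?_ ?_ ?_ ?_⟩ <;>
    simp only [bform_expand, hg1, hg2, hg3, v6_0, v6_1, v6_2, v6_3, v6_4, v6_5] <;>
    first
      | linear_combination (-1 : Z3) * h1
      | linear_combination (-1 : Z3) * h2
      | linear_combination (-1 : Z3) * h3
      | linear_combination (-1 : Z3) * h4
      | linear_combination (-1 : Z3) * h5
      | linear_combination (-1 : Z3) * h6

end LagAux
namespace LagAux

lemma proj3_apply (x : V3) (i : Fin 3) : proj3 x i = x (Fin.castLE (by omega) i) := rfl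

lemma proj3_0 (x : V3) : proj3 x 0 = x 0 := rfl
lemma proj3_1 (x : V3) : proj3 x 1 = x 1 := rfl
lemma proj3_2 (x : V3) : proj3 x 2 = x 2 := rfl

lemma proj3_ext {x y : V3} (h0 : x 0 = y 0) (h1 : x 1 = y 1) (h2 : x 2 = y 2) :
    proj3 x = proj3 y := by
  funext i
  fin_cases i
  · exact h0
  · exact h1
  · exact h2

lemma la_bij (m : Col × Col × Col) :
    Function.Bijective fun x : LA m => proj3 (x : V3) := by
  constructor
  · rintro ⟨x, hx⟩ ⟨y, hy⟩ hxy
    obtain ⟨a, b, c, rfl⟩ := mem_trip.mp hx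
    obtain ⟨a', b', c', rfl⟩ := mem_trip.mp hy
    simp only at hxy
    have e0 := congrFun hxy 0
    have e1 := congrFun hxy 1
    have e2 := congrFun hxy 2
    simp only [proj3_0, proj3_1, proj3_2, Pi.add_apply, Pi.smul_apply, smul_eq_mul,
      hg1, hg2, hg3, v6_0, v6_1, v6_2, mul_one, mul_zero, add_zero, zero_add] at e0 e1 e2
    subst e0 e1 e2
    rfl
  · intro y
    refine ⟨⟨y 0 • hg1 m + y 1 • hg2 m + y 2 • hg3 m, mem_trip.mpr ⟨_, _, _, rfl⟩⟩, ?_⟩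
    funext i
    fin_cases i <;>
      simp [proj3_0, proj3_1, proj3_2, hg1, hg2, hg3]

/-- extraction: if `hg`-style generator of m is in LA m', coefficients are forced -/
lemma la_inj : ∀ m m' : Col × Col × Col, LA m = LA m' → m = m' := by
  intro m m' h
  have h1 : hg1 m ∈ LA m' := h ▸ mem_trip.mpr ⟨1, 0, 0, by simp⟩
  have h2 : hg2 m ∈ LA m' := h ▸ mem_trip.mpr ⟨0, 1, 0, by simp⟩
  have h3 : hg3 m ∈ LA m' := h ▸ mem_trip.mpr ⟨0, 0, 1, by simp⟩
  obtain ⟨a, b, c, e⟩ := mem_trip.mp h1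
  have e0 := congrFun e 0; have e1 := congrFun e 1; have e2 := congrFun e 2
  have e3 := congrFun e 3; have e4 := congrFun e 4; have e5 := congrFun e 5
  simp only [hg1, hg2, hg3, Pi.add_apply, Pi.smul_apply, smul_eq_mul,
    v6_0, v6_1, v6_2, v6_3, v6_4, v6_5, mul_one, mul_zero, add_zero, zero_add] at e0 e1 e2 e3 e4 e5
  subst e0 e1 e2
  obtain ⟨a, b, c, f⟩ := mem_trip.mp h2
  have f0 := congrFun f 0; have f1 := congrFun f 1; have f2 := congrFun f 2
  have f3 := congrFun f 3; have f4 := congrFun f 4; have f5 := congrFun f 5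
  simp only [hg1, hg2, hg3, Pi.add_apply, Pi.smul_apply, smul_eq_mul,
    v6_0, v6_1, v6_2, v6_3, v6_4, v6_5, mul_one, mul_zero, add_zero, zero_add] at f0 f1 f2 f3 f4 f5
  subst f0 f1 f2
  obtain ⟨a, b, c, g⟩ := mem_trip.mp h3
  have g0 := congrFun g 0; have g1 := congrFun g 1; have g2 := congrFun g 2
  have g3 := congrFun g 3; have g4 := congrFun g 4; have g5 := congrFun g 5
  simp only [hg1, hg2, hg3, Pi.add_apply, Pi.smul_apply, smul_eq_mul,
    v6_0, v6_1, v6_2, v6_3, v6_4, v6_5, mul_one, mul_zero, add_zero, zero_add] at g0 g1 g2 g3 g4 g5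
  subst g0 g1 g2
  simp only [one_mul, zero_mul, add_zero, zero_add] at e3 e4 e5 f3 f4 f5 g3 g4 g5
  obtain ⟨m1, m2, m3⟩ := m; obtain ⟨m1', m2', m3'⟩ := m'
  obtain ⟨x1,x2,x3⟩ := m1; obtain ⟨y1,y2,y3⟩ := m2; obtain ⟨z1,z2,z3⟩ := m3
  simp_all

end LagAux
namespace LagAux

lemma v6_eta (x : V3) : x = v6 (x 0) (x 1) (x 2) (x 3) (x 4) (x 5) := by
  funext i; fin_cases i <;> rfl

lemma la_surj {L : Submodule Z3 V3} (hL : IsLagrangian L)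
    (hbij : Function.Bijective fun x : L => proj3 (x : V3)) :
    ∃ m : Col × Col × Col, ocond m ∧ L = LA m := by
  obtain ⟨X0, hX0⟩ := hbij.2 ![1,0,0]
  obtain ⟨X1, hX1⟩ := hbij.2 ![0,1,0]
  obtain ⟨X2, hX2⟩ := hbij.2 ![0,0,1]
  simp only at hX0 hX1 hX2
  have p00 : (X0 : V3) 0 = 1 := congrFun hX0 0
  have p01 : (X0 : V3) 1 = 0 := congrFun hX0 1
  have p02 : (X0 : V3) 2 = 0 := congrFun hX0 2
  have p10 : (X1 : V3) 0 = 0 := congrFun hX1 0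
  have p11 : (X1 : V3) 1 = 1 := congrFun hX1 1
  have p12 : (X1 : V3) 2 = 0 := congrFun hX1 2
  have p20 : (X2 : V3) 0 = 0 := congrFun hX2 0
  have p21 : (X2 : V3) 1 = 0 := congrFun hX2 1
  have p22 : (X2 : V3) 2 = 1 := congrFun hX2 2
  set m : Col × Col × Col :=
    (((X0:V3) 3, (X0:V3) 4, (X0:V3) 5), ((X1:V3) 3, (X1:V3) 4, (X1:V3) 5),
      ((X2:V3) 3, (X2:V3) 4, (X2:V3) 5)) with hm
  have hX0m : (X0 : V3) = hg1 m := by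
    rw [v6_eta ((X0 : V3))]; unfold hg1; rw [p00, p01, p02]
  have hX1m : (X1 : V3) = hg2 m := by
    rw [v6_eta ((X1 : V3))]; unfold hg2; rw [p10, p11, p12]
  have hX2m : (X2 : V3) = hg3 m := by
    rw [v6_eta ((X2 : V3))]; unfold hg3; rw [p20, p21, p22]
  have b00 := hL.2 _ X0.2 _ X0.2
  have b01 := hL.2 _ X0.2 _ X1.2
  have b02 := hL.2 _ X0.2 _ X2.2
  have b11 := hL.2 _ X1.2 _ X1.2
  have b12 := hL.2 _ X1.2 _ X2.2
  have b22 := hL.2 _ X2.2 _ X2.2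
  simp only [bform_expand, p00, p01, p02, p10, p11, p12, p20, p21, p22] at b00 b01 b02 b11 b12 b22
  refine ⟨m, ⟨?_, ?_, ?_, ?_, ?_, ?_⟩, ?_⟩
  · simp only [dotc, hm]; linear_combination -b00
  · simp only [dotc, hm]; linear_combination -b01
  · simp only [dotc, hm]; linear_combination -b02
  · simp only [dotc, hm]; linear_combination -b11
  · simp only [dotc, hm]; linear_combination -b12
  · simp only [dotc, hm]; linear_combination -b22
  · -- L = LA m
    have hle : L ≤ LA m := by
      intro x hx
      have hd : x - (x 0 • (X0:V3) + x 1 • (X1:V3) + x 2 • (X2:V3)) ∈ L := by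
        exact L.sub_mem hx (L.add_mem (L.add_mem (L.smul_mem _ X0.2) (L.smul_mem _ X1.2))
          (L.smul_mem _ X2.2))
      have hdproj : proj3 (x - (x 0 • (X0:V3) + x 1 • (X1:V3) + x 2 • (X2:V3))) =
          proj3 ((0 : L) : V3) := by
        apply proj3_ext <;>
          simp [p00, p01, p02, p10, p11, p12, p20, p21, p22]
      have : (⟨_, hd⟩ : L) = (0 : L) := hbij.1 hdproj
      have hzero : x - (x 0 • (X0:V3) + x 1 • (X1:V3) + x 2 • (X2:V3)) = 0 :=
        congrArg Subtype.val this
      have hxeq : x = x 0 • (X0:V3) + x 1 • (X1:V3) + x 2 • (X2:V3) := by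
        linear_combination (norm := module) hzero
      rw [hxeq, hX0m, hX1m, hX2m]
      exact mem_trip.mpr ⟨_, _, _, rfl⟩
    have : Module.finrank Z3 L = Module.finrank Z3 (LA m) := by
      rw [hL.1]; exact (trip_finrank (la_coeffs m)).symm
    exact Submodule.eq_of_le_of_finrank_eq hle this

end LagAux
namespace LagAux

lemma three_eq_zero : (3 : Z3) = 0 := by decide

section CaseW

variable (w3 w4 w5 : Z3)

def zw : V3 := v6 0 0 0 w3 w4 w5

def qcond (p : Z3 × Z3 × Z3 × Z3) : Prop :=
  p.1*p.1 + p.2.2.1*p.2.2.1 = 2 ∧ p.1*p.2.1 + p.2.2.1*p.2.2.2 = 0 ∧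
  p.2.1*p.2.1 + p.2.2.2*p.2.2.2 = 2

instance : DecidablePred qcond := fun p => by unfold qcond; infer_instance

/-- generators for the Lagrangians containing `zw` -/
def qg1 (p : Z3 × Z3 × Z3 × Z3) : V3 := v6 1 0 p.1 (w3*p.2.2.1) 0 (-(w5*p.2.2.1))
def qg2 (p : Z3 × Z3 × Z3 × Z3) : V3 := v6 0 1 p.2.1 (w3*p.2.2.2) 0 (-(w5*p.2.2.2))

def LB (p : Z3 × Z3 × Z3 × Z3) : Submodule Z3 V3 := trip (qg1 w3 w5 p) (qg2 w3 w5 p) (zw w3 w4 w5)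

variable (hw3 : w3*w3 = 1) (hw4 : w4*w4 = 1) (hw5 : w5*w5 = 1)
include hw3 hw4 hw5

lemma lb_coeffs (p : Z3 × Z3 × Z3 × Z3) (a b c : Z3)
    (h : a • qg1 w3 w5 p + b • qg2 w3 w5 p + c • zw w3 w4 w5 = 0) : a = 0 ∧ b = 0 ∧ c = 0 := by
  have e0 := congrFun h 0
  have e1 := congrFun h 1
  have e3 := congrFun h 3
  simp only [qg1, qg2, zw, Pi.add_apply, Pi.smul_apply, smul_eq_mul,
    v6_0, v6_1, v6_3, Pi.zero_apply, mul_one, mul_zero, add_zero, zero_add] at e0 e1 e3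
  refine ⟨e0, e1, ?_⟩
  subst e0 e1
  simp only [zero_mul, zero_add] at e3
  -- e3 : c * w3 = 0
  linear_combination w3 * e3 - c * hw3

lemma lb_lagrangian (p : Z3 × Z3 × Z3 × Z3) (hp : qcond p) : IsLagrangian (LB w3 w4 w5 p) := by
  obtain ⟨h1, h2, h3⟩ := hp
  refine ⟨trip_finrank (lb_coeffs w3 w4 w5 hw3 hw4 hw5 p), trip_isotropic ?_ ?_ ?_ ?_ ?_ ?_ ?_ ?_ ?_⟩ <;>
    simp only [bform_expand, qg1, qg2, zw, v6_0, v6_1, v6_2, v6_3, v6_4, v6_5] <;>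
    first
    | linear_combination h1 + (-(p.2.2.1*p.2.2.1))*hw3 + (-(p.2.2.1*p.2.2.1))*hw5 + (1-p.2.2.1*p.2.2.1)*three_eq_zero
    | linear_combination h2 + (-(p.2.2.1*p.2.2.2))*hw3 + (-(p.2.2.1*p.2.2.2))*hw5 + (-(p.2.2.1*p.2.2.2))*three_eq_zero
    | linear_combination h3 + (-(p.2.2.2*p.2.2.2))*hw3 + (-(p.2.2.2*p.2.2.2))*hw5 + (1-p.2.2.2*p.2.2.2)*three_eq_zero
    | linear_combination (-(p.2.2.1))*hw3 + p.2.2.1*hw5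
    | linear_combination (-(p.2.2.2))*hw3 + p.2.2.2*hw5
    | linear_combination -hw3 - hw4 - hw5 - three_eq_zero


end CaseW

end LagAux
namespace LagAux

section CaseW2

variable (w3 w4 w5 : Z3)
variable (hw3 : w3*w3 = 1) (hw4 : w4*w4 = 1) (hw5 : w5*w5 = 1)

/-- coordinate-wise multiple-of-z lemma, to be proved by `decide` for each concrete w -/
def MultHyp : Prop := ∀ x : V3, x 0 = 0 → x 1 = 0 → x 2 = 0 →
    w3*x 3 - w4*x 4 = 0 → w3*x 3 + w4*x 4 + w5*x 5 = 0 → ∃ t : Z3, x = t • zw w3 w4 w5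

/-- bform multiple-of-z lemma -/
def MultbHyp : Prop := ∀ x : V3, x 0 = 0 → x 1 = 0 → bform x x = 0 →
    bform x (zw w3 w4 w5) = 0 → ∃ t : Z3, x = t • zw w3 w4 w5

/-- derivation of the quadruple conditions -/
def QderHyp : Prop := ∀ x2 x3 x4 x5 y2 y3 y4 y5 : Z3,
    w3*x3 + w4*x4 + w5*x5 = 0 → w3*y3 + w4*y4 + w5*y5 = 0 →
    1 + x2*x2 - x3*x3 - x4*x4 - x5*x5 = 0 →
    x2*y2 - x3*y3 - x4*y4 - x5*y5 = 0 →
    1 + y2*y2 - y3*y3 - y4*y4 - y5*y5 = 0 →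
    (x2*x2 + (w3*x3-w4*x4)*(w3*x3-w4*x4) = 2 ∧
     x2*y2 + (w3*x3-w4*x4)*(w3*y3-w4*y4) = 0 ∧
     y2*y2 + (w3*y3-w4*y4)*(w3*y3-w4*y4) = 2)

include hw3 in
lemma zw_ne_zero : zw w3 w4 w5 ≠ 0 := by
  intro h
  have h3 : w3 = 0 := by simpa [zw] using congrFun h 3
  rw [h3] at hw3
  simp at hw3

lemma lb_mem_z (p : Z3 × Z3 × Z3 × Z3) : zw w3 w4 w5 ∈ LB w3 w4 w5 p :=
  mem_trip.mpr ⟨0, 0, 1, by simp⟩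

include hw3 hw4 hw5 in
lemma lb_surj (hm : MultHyp w3 w4 w5) (hmb : MultbHyp w3 w4 w5) (hq : QderHyp w3 w4 w5)
    {L : Submodule Z3 V3} (hL : IsLagrangian L) (hz : zw w3 w4 w5 ∈ L) :
    ∃ p : Z3 × Z3 × Z3 × Z3, qcond p ∧ L = LB w3 w4 w5 p := by
  classical
  -- the projection onto the first two coordinates, restricted to L
  set z := zw w3 w4 w5 with hzdef
  let fm : Fin 2 → (V3 →ₗ[Z3] Z3) := ![LinearMap.proj 0, LinearMap.proj 1]
  let rL : L →ₗ[Z3] (Fin 2 → Z3) := (LinearMap.pi fm).comp L.subtype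
  have rL_apply0 : ∀ x : L, rL x 0 = (x : V3) 0 := fun x => rfl
  have rL_apply1 : ∀ x : L, rL x 1 = (x : V3) 1 := fun x => rfl
  have hzL : (⟨z, hz⟩ : L) ≠ 0 := by
    intro h
    exact zw_ne_zero w3 w4 w5 hw3 (by simpa using congrArg Subtype.val h)
  -- kernel of rL is contained in the span of z
  have hker : LinearMap.ker rL ≤ Submodule.span Z3 {(⟨z, hz⟩ : L)} := by
    intro x hx
    have h0 : (x : V3) 0 = 0 := by rw [← rL_apply0 x]; rw [LinearMap.mem_ker.mp hx]; rfl
    have h1 : (x : V3) 1 = 0 := by rw [← rL_apply1 x]; rw [LinearMap.mem_ker.mp hx]; rfl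
    obtain ⟨t, ht⟩ := hmb (x : V3) h0 h1 (hL.2 _ x.2 _ x.2) (hL.2 _ x.2 _ hz)
    refine Submodule.mem_span_singleton.mpr ⟨t, ?_⟩
    exact Subtype.ext (by simpa using ht.symm)
  have hkerle : Module.finrank Z3 (LinearMap.ker rL) ≤ 1 := by
    have := Submodule.finrank_mono hker
    rwa [finrank_span_singleton hzL] at this
  have hrn := LinearMap.finrank_range_add_finrank_ker rL
  rw [hL.1] at hrn
  have hrangele : Module.finrank Z3 (LinearMap.range rL) ≤ 2 := by
    have := Submodule.finrank_le (LinearMap.range rL)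
    rwa [Module.finrank_fin_fun] at this
  have hrange : LinearMap.range rL = ⊤ := by
    apply Submodule.eq_top_of_finrank_eq
    rw [Module.finrank_fin_fun]
    omega
  have hsurj : Function.Surjective rL := LinearMap.range_eq_top.mp hrange
  obtain ⟨X0, hX0⟩ := hsurj ![1, 0]
  obtain ⟨X1, hX1⟩ := hsurj ![0, 1]
  have q00 : (X0 : V3) 0 = 1 := by rw [← rL_apply0 X0, hX0]; rfl
  have q01 : (X0 : V3) 1 = 0 := by rw [← rL_apply1 X0, hX0]; rfl
  have q10 : (X1 : V3) 0 = 0 := by rw [← rL_apply0 X1, hX1]; rfl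
  have q11 : (X1 : V3) 1 = 1 := by rw [← rL_apply1 X1, hX1]; rfl
  -- the quadruple
  set p : Z3 × Z3 × Z3 × Z3 :=
    ((X0:V3) 2, (X1:V3) 2, w3*(X0:V3) 3 - w4*(X0:V3) 4, w3*(X1:V3) 3 - w4*(X1:V3) 4) with hp
  have b00 := hL.2 _ X0.2 _ X0.2
  have b01 := hL.2 _ X0.2 _ X1.2
  have b11 := hL.2 _ X1.2 _ X1.2
  have t0 := hL.2 _ X0.2 _ hz
  have t1 := hL.2 _ X1.2 _ hz
  simp only [bform_expand, hzdef, zw, v6_0, v6_1, v6_2, v6_3, v6_4, v6_5,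
    q00, q01, q10, q11] at b00 b01 b11 t0 t1
  have t0' : w3*(X0:V3) 3 + w4*(X0:V3) 4 + w5*(X0:V3) 5 = 0 := by linear_combination -t0
  have t1' : w3*(X1:V3) 3 + w4*(X1:V3) 4 + w5*(X1:V3) 5 = 0 := by linear_combination -t1
  have b00' : 1 + (X0:V3) 2*(X0:V3) 2 - (X0:V3) 3*(X0:V3) 3 - (X0:V3) 4*(X0:V3) 4
      - (X0:V3) 5*(X0:V3) 5 = 0 := by linear_combination b00
  have b01' : (X0:V3) 2*(X1:V3) 2 - (X0:V3) 3*(X1:V3) 3 - (X0:V3) 4*(X1:V3) 4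
      - (X0:V3) 5*(X1:V3) 5 = 0 := by linear_combination b01
  have b11' : 1 + (X1:V3) 2*(X1:V3) 2 - (X1:V3) 3*(X1:V3) 3 - (X1:V3) 4*(X1:V3) 4
      - (X1:V3) 5*(X1:V3) 5 = 0 := by linear_combination b11
  obtain ⟨c1, c2, c3⟩ := hq _ _ _ _ _ _ _ _ t0' t1' b00' b01' b11'
  refine ⟨p, ⟨c1, c2, c3⟩, ?_⟩
  -- X0 = qg1 p + τ0 • z, X1 = qg2 p + τ1 • z
  have hX0mem : (X0 : V3) ∈ LB w3 w4 w5 p := by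
    have hd := hm ((X0:V3) - qg1 w3 w5 p) ?_ ?_ ?_ ?_ ?_
    · obtain ⟨t, ht⟩ := hd
      have : (X0 : V3) = qg1 w3 w5 p + t • z := by
        rw [hzdef]; linear_combination (norm := module) ht
      rw [this]
      exact (LB w3 w4 w5 p).add_mem (mem_trip.mpr ⟨1, 0, 0, by simp⟩)
        ((LB w3 w4 w5 p).smul_mem t (lb_mem_z w3 w4 w5 p))
    · simp [qg1, q00]
    · simp [qg1, q01]
    · simp [qg1, hp]
    · simp only [Pi.sub_apply, qg1, v6_3, v6_4]
      linear_combination (-(p.2.2.1))*hw3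
    · simp only [Pi.sub_apply, qg1, v6_3, v6_4, v6_5]
      linear_combination t0' + p.2.2.1*hw5 - p.2.2.1*hw3
  have hX1mem : (X1 : V3) ∈ LB w3 w4 w5 p := by
    have hd := hm ((X1:V3) - qg2 w3 w5 p) ?_ ?_ ?_ ?_ ?_
    · obtain ⟨t, ht⟩ := hd
      have : (X1 : V3) = qg2 w3 w5 p + t • z := by
        rw [hzdef]; linear_combination (norm := module) ht
      rw [this]
      exact (LB w3 w4 w5 p).add_mem (mem_trip.mpr ⟨0, 1, 0, by simp⟩)
        ((LB w3 w4 w5 p).smul_mem t (lb_mem_z w3 w4 w5 p))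
    · simp [qg2, q10]
    · simp [qg2, q11]
    · simp [qg2, hp]
    · simp only [Pi.sub_apply, qg2, v6_3, v6_4]
      linear_combination (-(p.2.2.2))*hw3
    · simp only [Pi.sub_apply, qg2, v6_3, v6_4, v6_5]
      linear_combination t1' + p.2.2.2*hw5 - p.2.2.2*hw3
  have hle : L ≤ LB w3 w4 w5 p := by
    intro x hx
    have hd : x - (x 0 • (X0:V3) + x 1 • (X1:V3)) ∈ L :=
      L.sub_mem hx (L.add_mem (L.smul_mem _ X0.2) (L.smul_mem _ X1.2))
    have h0 : (x - (x 0 • (X0:V3) + x 1 • (X1:V3))) 0 = 0 := by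
      simp [q00, q10]
    have h1 : (x - (x 0 • (X0:V3) + x 1 • (X1:V3))) 1 = 0 := by
      simp [q01, q11]
    obtain ⟨t, ht⟩ := hmb _ h0 h1 (hL.2 _ hd _ hd) (hL.2 _ hd _ hz)
    have hxeq : x = x 0 • (X0:V3) + x 1 • (X1:V3) + t • z := by
      rw [hzdef]; linear_combination (norm := module) ht
    rw [hxeq]
    exact (LB w3 w4 w5 p).add_mem ((LB w3 w4 w5 p).add_mem
      ((LB w3 w4 w5 p).smul_mem _ hX0mem) ((LB w3 w4 w5 p).smul_mem _ hX1mem))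
      ((LB w3 w4 w5 p).smul_mem _ (lb_mem_z w3 w4 w5 p))
  have : Module.finrank Z3 L = Module.finrank Z3 (LB w3 w4 w5 p) := by
    rw [hL.1]
    exact (trip_finrank (lb_coeffs w3 w4 w5 hw3 hw4 hw5 p)).symm
  exact Submodule.eq_of_le_of_finrank_eq hle this

end CaseW2

end LagAux
namespace LagAux

section CaseW3

variable (w3 w4 w5 : Z3)
variable (hw3 : w3*w3 = 1) (hw4 : w4*w4 = 1) (hw5 : w5*w5 = 1)

include hw3 hw4 hw5 in
lemma lb_inj (p p' : Z3 × Z3 × Z3 × Z3)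
    (h : LB w3 w4 w5 p = LB w3 w4 w5 p') : p = p' := by
  have h1 : qg1 w3 w5 p ∈ LB w3 w4 w5 p' := h ▸ mem_trip.mpr ⟨1, 0, 0, by simp⟩
  have h2 : qg2 w3 w5 p ∈ LB w3 w4 w5 p' := h ▸ mem_trip.mpr ⟨0, 1, 0, by simp⟩
  obtain ⟨a, b, c, e⟩ := mem_trip.mp h1
  have e0 := congrFun e 0; have e1 := congrFun e 1; have e2 := congrFun e 2
  have e3 := congrFun e 3; have e5 := congrFun e 5
  simp only [qg1, qg2, zw, Pi.add_apply, Pi.smul_apply, smul_eq_mul,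
    v6_0, v6_1, v6_2, v6_3, v6_5, mul_one, mul_zero, add_zero, zero_add] at e0 e1 e2 e3 e5
  subst e0 e1
  simp only [one_mul, zero_mul, add_zero, zero_add, mul_zero] at e2 e3 e5
  obtain ⟨a', b', c', f⟩ := mem_trip.mp h2
  have f0 := congrFun f 0; have f1 := congrFun f 1; have f2 := congrFun f 2
  have f3 := congrFun f 3; have f5 := congrFun f 5
  simp only [qg1, qg2, zw, Pi.add_apply, Pi.smul_apply, smul_eq_mul,
    v6_0, v6_1, v6_2, v6_3, v6_5, mul_one, mul_zero, add_zero, zero_add] at f0 f1 f2 f3 f5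
  subst f0 f1
  simp only [one_mul, zero_mul, add_zero, zero_add, mul_zero] at f2 f3 f5
  -- e2 : p.1 = p'.1, e3 : w3*p.2.2.1 = w3*p'.2.2.1 + c*w3, e5 : -(w5*p.2.2.1) = -(w5*p'.2.2.1) + c*w5
  obtain ⟨a1, b1, c1, d1⟩ := p
  obtain ⟨a2, b2, c2, d2⟩ := p'
  simp only at e2 e3 e5 f2 f3 f5 ⊢
  refine Prod.ext ?_ (Prod.ext ?_ (Prod.ext ?_ ?_)) <;> simp only
  · exact e2
  · exact f2
  · have e3' : c1 = c2 + c := by linear_combination w3*e3 + (c2 + c - c1)*hw3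
    have e5' : c1 = c2 - c := by linear_combination (-(w5))*e5 + (c2 - c - c1)*hw5
    linear_combination 2*e3' + 2*e5' + (c2-c1)*three_eq_zero
  · have f3' : d1 = d2 + c' := by linear_combination w3*f3 + (d2 + c' - d1)*hw3
    have f5' : d1 = d2 - c' := by linear_combination (-(w5))*f5 + (d2 - c' - d1)*hw5
    linear_combination 2*f3' + 2*f5' + (d2-d1)*three_eq_zero
end CaseW3

end LagAux
namespace LagAux

def W : Fin 4 → Z3 × Z3 × Z3 := ![(1,1,1), (1,1,2), (1,2,1), (1,2,2)]

def zi (i : Fin 4) : V3 := zw (W i).1 (W i).2.1 (W i).2.2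

instance (w3 w4 w5 : Z3) : Decidable (MultHyp w3 w4 w5) := by unfold MultHyp; infer_instance
instance (w3 w4 w5 : Z3) : Decidable (MultbHyp w3 w4 w5) := by unfold MultbHyp; infer_instance
instance (w3 w4 w5 : Z3) : Decidable (QderHyp w3 w4 w5) := by unfold QderHyp; infer_instance

lemma hWunit : ∀ i : Fin 4, (W i).1*(W i).1 = 1 ∧ (W i).2.1*(W i).2.1 = 1 ∧
    (W i).2.2*(W i).2.2 = 1 := by decide

lemma hMult : ∀ i : Fin 4, MultHyp (W i).1 (W i).2.1 (W i).2.2 := by decide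

lemma hMultb : ∀ i : Fin 4, MultbHyp (W i).1 (W i).2.1 (W i).2.2 := by decide

lemma hQder : ∀ i : Fin 4, QderHyp (W i).1 (W i).2.1 (W i).2.2 := by decide

lemma qcond_card : Nat.card {p : Z3 × Z3 × Z3 × Z3 // qcond p} = 8 := by
  rw [Nat.card_eq_fintype_card]; decide

/-- the per-line count -/
lemma count_zi (i : Fin 4) :
    Nat.card {L : Submodule Z3 V3 // IsLagrangian L ∧ zi i ∈ L} = 8 := by
  obtain ⟨u3, u4, u5⟩ := hWunit i
  have hbij : Function.Bijective
      (fun p : {p : Z3 × Z3 × Z3 × Z3 // qcond p} =>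
        (⟨LB (W i).1 (W i).2.1 (W i).2.2 p.1,
          lb_lagrangian (W i).1 (W i).2.1 (W i).2.2 u3 u4 u5 p.1 p.2,
          lb_mem_z (W i).1 (W i).2.1 (W i).2.2 p.1⟩ :
          {L : Submodule Z3 V3 // IsLagrangian L ∧ zi i ∈ L})) := by
    constructor
    · rintro ⟨p, hp⟩ ⟨p', hp'⟩ h
      exact Subtype.ext (lb_inj _ _ _ u3 u4 u5 p p' (congrArg Subtype.val h))
    · rintro ⟨L, hL, hz⟩
      obtain ⟨p, hp, rfl⟩ := lb_surj _ _ _ u3 u4 u5 (hMult i) (hMultb i) (hQder i) hL hz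
      exact ⟨⟨p, hp⟩, rfl⟩
  rw [← Nat.card_eq_of_bijective _ hbij, qcond_card]

lemma zi_ne_zero : ∀ i : Fin 4, zi i ≠ 0 := by decide

lemma zi_proj : ∀ i : Fin 4, zi i 0 = 0 ∧ zi i 1 = 0 ∧ zi i 2 = 0 := by decide

lemma zi_distinct : ∀ i j : Fin 4, i ≠ j → bform (zi i) (zi j) ≠ 0 := by decide

lemma wfind : ∀ u : V3, u 0 = 0 → u 1 = 0 → u 2 = 0 → u ≠ 0 → bform u u = 0 →
    ∃ i : Fin 4, ∃ c : Z3, c • u = zi i := by decide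

lemma notbij_of_z (i : Fin 4) {L : Submodule Z3 V3} (hz : zi i ∈ L) :
    ¬ Function.Bijective fun x : L => proj3 (x : V3) := by
  intro hb
  have h1 : proj3 ((⟨zi i, hz⟩ : L) : V3) = proj3 (((0 : L) : V3)) := by
    apply proj3_ext <;> simp [(zi_proj i).1, (zi_proj i).2.1, (zi_proj i).2.2]
  have := hb.1 h1
  exact zi_ne_zero i (by simpa using congrArg Subtype.val this)

lemma unique_zi {L : Submodule Z3 V3} (hL : IsLagrangian L) {i j : Fin 4}
    (hi : zi i ∈ L) (hj : zi j ∈ L) : i = j := by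
  by_contra hne
  exact zi_distinct i j hne (hL.2 _ hi _ hj)

lemma exists_zi {L : Submodule Z3 V3} (hL : IsLagrangian L)
    (hnb : ¬ Function.Bijective fun x : L => proj3 (x : V3)) : ∃ i : Fin 4, zi i ∈ L := by
  classical
  letI : Fintype L := Fintype.ofFinite L
  have hcard : Fintype.card L = Fintype.card (Fin 3 → Z3) := by
    have b := Module.finBasisOfFinrankEq Z3 L hL.1
    exact Fintype.card_congr b.equivFun.toEquiv
  have hninj : ¬ Function.Injective fun x : L => proj3 (x : V3) := by
    intro hinj
    exact hnb ((Fintype.bijective_iff_injective_and_card _).mpr ⟨hinj, hcard⟩)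
  obtain ⟨x, y, hxy, hne⟩ := Function.not_injective_iff.mp hninj
  have hu : (x : V3) - (y : V3) ∈ L := L.sub_mem x.2 y.2
  have hune : (x : V3) - (y : V3) ≠ 0 := by
    intro h
    exact hne (Subtype.ext (by linear_combination (norm := module) h))
  have h0 : ((x : V3) - (y : V3)) 0 = 0 := by
    have := congrFun hxy 0
    simp only [proj3_0] at this
    simp [this]
  have h1 : ((x : V3) - (y : V3)) 1 = 0 := by
    have := congrFun hxy 1
    simp only [proj3_1] at this
    simp [this]
  have h2 : ((x : V3) - (y : V3)) 2 = 0 := by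
    have := congrFun hxy 2
    simp only [proj3_2] at this
    simp [this]
  obtain ⟨i, c, hc⟩ := wfind _ h0 h1 h2 hune (hL.2 _ hu _ hu)
  exact ⟨i, hc ▸ L.smul_mem c hu⟩

end LagAux
namespace LagAux

instance : Finite (Submodule Z3 V3) :=
  Finite.of_injective (fun L => (L : Set V3)) SetLike.coe_injective

lemma ocond_card : Nat.card {m : Col × Col × Col // ocond m} = 48 := by
  rw [Nat.card_eq_fintype_card]; decide

lemma count_bij :
    Nat.card {L : Submodule Z3 V3 //
      IsLagrangian L ∧ Function.Bijective fun x : L => proj3 (x : V3)} = 48 := by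
  have hbij : Function.Bijective
      (fun m : {m : Col × Col × Col // ocond m} =>
        (⟨LA m.1, la_lagrangian m.2, la_bij m.1⟩ :
          {L : Submodule Z3 V3 //
            IsLagrangian L ∧ Function.Bijective fun x : L => proj3 (x : V3)})) := by
    constructor
    · rintro ⟨m, hm⟩ ⟨m', hm'⟩ h
      exact Subtype.ext (la_inj m m' (congrArg Subtype.val h))
    · rintro ⟨L, hL, hb⟩
      obtain ⟨m, hm, rfl⟩ := la_surj hL hb
      exact ⟨⟨m, hm⟩, rfl⟩
  rw [← Nat.card_eq_of_bijective _ hbij, ocond_card]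

lemma count_deg :
    Nat.card {L : Submodule Z3 V3 //
      IsLagrangian L ∧ ¬ Function.Bijective fun x : L => proj3 (x : V3)} = 32 := by
  classical
  have hbij : Function.Bijective
      (fun s : (Σ i : Fin 4, {L : Submodule Z3 V3 // IsLagrangian L ∧ zi i ∈ L}) =>
        (⟨s.2.1, s.2.2.1, notbij_of_z s.1 s.2.2.2⟩ :
          {L : Submodule Z3 V3 //
            IsLagrangian L ∧ ¬ Function.Bijective fun x : L => proj3 (x : V3)})) := by
    constructor
    · rintro ⟨i, L, hL, hzi⟩ ⟨j, M, hM, hzj⟩ h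
      have hLM : L = M := congrArg Subtype.val h
      subst hLM
      have hij : i = j := unique_zi hL hzi hzj
      subst hij
      rfl
    · rintro ⟨L, hL, hnb⟩
      obtain ⟨i, hi⟩ := exists_zi hL hnb
      exact ⟨⟨i, ⟨L, hL, hi⟩⟩, rfl⟩
  rw [← Nat.card_eq_of_bijective _ hbij]
  letI : ∀ i : Fin 4, Fintype {L : Submodule Z3 V3 // IsLagrangian L ∧ zi i ∈ L} :=
    fun i => Fintype.ofFinite _
  rw [Nat.card_eq_fintype_card, Fintype.card_sigma]
  have : ∀ i : Fin 4, Fintype.card {L : Submodule Z3 V3 // IsLagrangian L ∧ zi i ∈ L} = 8 :=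
    fun i => by rw [← Nat.card_eq_fintype_card, count_zi i]
  simp [this]

lemma count_total : Nat.card {L : Submodule Z3 V3 // IsLagrangian L} = 80 := by
  classical
  have hbij : Function.Bijective
      (fun s : ({L : Submodule Z3 V3 //
            IsLagrangian L ∧ Function.Bijective fun x : L => proj3 (x : V3)} ⊕
          {L : Submodule Z3 V3 //
            IsLagrangian L ∧ ¬ Function.Bijective fun x : L => proj3 (x : V3)}) =>
        (match s with
          | Sum.inl a => ⟨a.1, a.2.1⟩
          | Sum.inr b => ⟨b.1, b.2.1⟩ : {L : Submodule Z3 V3 // IsLagrangian L})) := by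
    constructor
    · rintro (⟨L, hL, hb⟩ | ⟨L, hL, hb⟩) (⟨M, hM, hb'⟩ | ⟨M, hM, hb'⟩) h <;>
        simp only at h <;>
        have hLM : L = M := congrArg Subtype.val h
      · subst hLM; rfl
      · subst hLM; exact absurd hb hb'
      · subst hLM; exact absurd hb' hb
      · subst hLM; rfl
    · rintro ⟨L, hL⟩
      by_cases hb : Function.Bijective fun x : L => proj3 (x : V3)
      · exact ⟨Sum.inl ⟨L, hL, hb⟩, rfl⟩
      · exact ⟨Sum.inr ⟨L, hL, hb⟩, rfl⟩
  rw [← Nat.card_eq_of_bijective _ hbij, Nat.card_sum, count_bij, count_deg]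

end LagAux

/-- There are exactly 32 Lagrangians `L ⊆ 𝔽₃⁶` on which the projection onto the first
three coordinates does NOT restrict to a linear isomorphism; equivalently, the total
number of Lagrangians is 80. -/
theorem count_lagrangians_degenerate_left_block :
    Nat.card {L : Submodule (ZMod 3) V3 //
      IsLagrangian L ∧ ¬ Function.Bijective fun x : L => proj3 (x : V3)} = 32 ∧
    Nat.card {L : Submodule (ZMod 3) V3 // IsLagrangian L} = 80 :=
  ⟨LagAux.count_deg, LagAux.count_total⟩
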